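/- Let s, t, w ∈ [1,∞] with 1/s + 1/t + 1/w = 1 and let p, q ∈ [1,∞], with p' the conjugate exponent of p. Then for every m ∈ V and every signal f : V → X, ‖T_m f‖_q ≤ ‖U*‖_{s,q} · ‖U‖_{∞,t} · ‖U‖_{p',w} · ‖f‖_p. In particular T_m : L^p(V,X) → L^q(V,X) is a continuous linear operator. -/

import Mathlib

open Finset MeasureTheory
open scoped ENNReal

/-- The `L^p` norm of a signal `f : Fin N → E` (sup-norm when `p = ∞`). -/
noncomputable def gsNorm {E : Type*} [NormedAddCommGroup E] {N : ℕ} (p : ℝ≥0∞)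
    (f : Fin N → E) : ℝ :=
  if p = ∞ then ⨆ n, ‖f n‖ else (∑ n, ‖f n‖ ^ p.toReal) ^ (1 / p.toReal)

lemma eLpNorm_count_ne_top {E : Type*} [NormedAddCommGroup E] {N : ℕ} (p : ℝ≥0∞)
    (f : Fin N → E) : eLpNorm f p Measure.count ≠ ∞ := by
  rcases eq_or_ne p 0 with rfl | hp0
  · simp [eLpNorm_exponent_zero]
  rcases eq_or_ne p ∞ with rfl | hpt
  · rw [eLpNorm_exponent_top, eLpNormEssSup_count]
    refine ne_top_of_le_ne_top (b := ∑ n : Fin N, (‖f n‖₊ : ℝ≥0∞)) ?_ ?_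
    · exact (ENNReal.sum_lt_top.2 fun n _ => ENNReal.coe_lt_top).ne
    · exact iSup_le fun n => Finset.single_le_sum (f := fun i : Fin N => (‖f i‖₊ : ℝ≥0∞)) (fun i _ => zero_le) (mem_univ n)
  · rw [eLpNorm_eq_lintegral_rpow_enorm_toReal hp0 hpt, lintegral_count, tsum_fintype]
    refine ENNReal.rpow_ne_top_of_nonneg (by positivity) ?_
    exact (ENNReal.sum_lt_top.2 fun n _ =>
      (ENNReal.rpow_lt_top_of_nonneg ENNReal.toReal_nonneg ENNReal.coe_ne_top)).ne

lemma gsNorm_eq_toReal {E : Type*} [NormedAddCommGroup E] {N : ℕ} {p : ℝ≥0∞} (hp0 : p ≠ 0)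
    (f : Fin N → E) : gsNorm p f = (eLpNorm f p Measure.count).toReal := by
  rcases eq_or_ne p ∞ with rfl | hpt
  · rw [gsNorm, if_pos rfl, eLpNorm_exponent_top, eLpNormEssSup_count,
      ENNReal.toReal_iSup (fun n => enorm_ne_top)]
    simp
  · rw [gsNorm, if_neg hpt, eLpNorm_eq_lintegral_rpow_enorm_toReal hp0 hpt, lintegral_count,
      tsum_fintype, ← ENNReal.toReal_rpow,
      ENNReal.toReal_sum (fun n _ => ENNReal.rpow_ne_top_of_nonneg ENNReal.toReal_nonneg
        enorm_ne_top)]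
    congr 1
    refine Finset.sum_congr rfl fun n _ => ?_
    rw [← ENNReal.toReal_rpow]
    simp

lemma eLpNorm_count_eq_ofReal {E : Type*} [NormedAddCommGroup E] {N : ℕ} {p : ℝ≥0∞} (hp0 : p ≠ 0)
    (f : Fin N → E) : eLpNorm f p Measure.count = ENNReal.ofReal (gsNorm p f) := by
  rw [gsNorm_eq_toReal hp0, ENNReal.ofReal_toReal (eLpNorm_count_ne_top p f)]

lemma eLpNorm_one_count {E : Type*} [NormedAddCommGroup E] {N : ℕ} (f : Fin N → E) :
    eLpNorm f 1 Measure.count = ∑ n, (‖f n‖₊ : ℝ≥0∞) := by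
  rw [eLpNorm_one_eq_lintegral_enorm, lintegral_count, tsum_fintype]; rfl

lemma holder_of_one_div {p q r : ℝ≥0∞} (h : 1 / r = 1 / p + 1 / q) :
    ENNReal.HolderTriple p q r := ⟨by simpa only [one_div] using h.symm⟩

lemma gsNorm_nonneg {E : Type*} [NormedAddCommGroup E] {N : ℕ} {p : ℝ≥0∞} (hp0 : p ≠ 0)
    (f : Fin N → E) : 0 ≤ gsNorm p f := by
  rw [gsNorm_eq_toReal hp0]; exact ENNReal.toReal_nonneg


/-- `u k` is the `k`-th column of a unitary matrix, i.e. the family of columns is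
orthonormal for the standard inner product on `𝕂^N` (hence an orthonormal basis). -/
def OrthoBasis {𝕂 : Type*} [RCLike 𝕂] {N : ℕ} (u : Fin N → Fin N → 𝕂) : Prop :=
  ∀ k l : Fin N, ∑ n, (starRingEnd 𝕂) (u k n) * u l n = if k = l then (1 : 𝕂) else 0

/-- Graph Fourier transform: `f̂ k = ∑ n, conj (u k n) • f n`. -/
noncomputable def gft {𝕂 : Type*} [RCLike 𝕂] {X : Type*} [NormedAddCommGroup X]
    [NormedSpace 𝕂 X] {N : ℕ} (u : Fin N → Fin N → 𝕂) (f : Fin N → X) : Fin N → X :=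
  fun k => ∑ n, (starRingEnd 𝕂) (u k n) • f n

/-- `p`-coherence `κ_p(U)`: the maximum of the `ℓ^p` norms of the columns of `U`. -/
noncomputable def coh {𝕂 : Type*} [RCLike 𝕂] {N : ℕ} (p : ℝ≥0∞)
    (u : Fin N → Fin N → 𝕂) : ℝ :=
  ⨆ k, gsNorm p (u k)

/-- Mixed norm `‖U‖_{p,q}`: the `ℓ^q` norm of the vector of `ℓ^p` norms of the columns. -/
noncomputable def mixNorm {𝕂 : Type*} [RCLike 𝕂] {N : ℕ} (p q : ℝ≥0∞)
    (u : Fin N → Fin N → 𝕂) : ℝ :=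
  gsNorm q (fun k => gsNorm p (u k))

/-- Graph convolution of a scalar signal `α` with a signal `f`:
`(α*f)(n) = ∑ k, u k n • (α̂ k • f̂ k)`. -/
noncomputable def gconv {𝕂 : Type*} [RCLike 𝕂] {X : Type*} [NormedAddCommGroup X]
    [NormedSpace 𝕂 X] {N : ℕ} (u : Fin N → Fin N → 𝕂) (α : Fin N → 𝕂)
    (f : Fin N → X) : Fin N → X :=
  fun n => ∑ k, u k n • (gft u α k • gft u f k)

/-- Graph translation operator `T_m f (n) = ∑ k, (u k n * conj (u k m)) • f̂ k`. -/
noncomputable def gtrans {𝕂 : Type*} [RCLike 𝕂] {X : Type*} [NormedAddCommGroup X]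
    [NormedSpace 𝕂 X] {N : ℕ} (u : Fin N → Fin N → 𝕂) (m : Fin N)
    (f : Fin N → X) : Fin N → X :=
  fun n => ∑ k, (u k n * (starRingEnd 𝕂) (u k m)) • gft u f k

/-- `‖T_m f‖_q ≤ ‖U*‖_{s,q}·‖U‖_{∞,t}·‖U‖_{p',w}·‖f‖_p`; in particular
`T_m` is a continuous linear operator. -/
theorem gtrans_continuity {𝕂 : Type*} [RCLike 𝕂] {X : Type*} [NormedAddCommGroup X]
    [NormedSpace 𝕂 X] [CompleteSpace X] {N : ℕ} (hN : 0 < N)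
    (u : Fin N → Fin N → 𝕂) (hU : OrthoBasis u) (m : Fin N)
    (s t w : ℝ≥0∞) (hs : 1 ≤ s) (ht : 1 ≤ t) (hw : 1 ≤ w)
    (hstw : 1 / s + 1 / t + 1 / w = 1)
    (p p' q : ℝ≥0∞) (hp : 1 ≤ p) (hq : 1 ≤ q) (hpp' : 1 / p + 1 / p' = 1) :
    (∀ f : Fin N → X, gsNorm q (gtrans u m f) ≤
      mixNorm s q (fun n k => u k n) * mixNorm ∞ t u * mixNorm p' w u * gsNorm p f) ∧
    Continuous (gtrans (X := X) u m) := by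
  have hs0 : s ≠ 0 := by rintro rfl; simp at hs
  have ht0 : t ≠ 0 := by rintro rfl; simp at ht
  have hw0 : w ≠ 0 := by rintro rfl; simp at hw
  have hq0 : q ≠ 0 := by rintro rfl; simp at hq
  have hp0 : p ≠ 0 := by rintro rfl; simp at hp
  have hp'0 : p' ≠ 0 := by
    rintro rfl
    simp [ENNReal.div_zero] at hpp'
  constructor
  · intro f
    set μ : Measure (Fin N) := Measure.count with hμ
    set Fp : ℝ := gsNorm p f with hFp
    have hFp0 : 0 ≤ Fp := gsNorm_nonneg hp0 f
    set M1 : ℝ := mixNorm s q (fun n k => u k n) with hM1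
    set M2 : ℝ := mixNorm ∞ t u with hM2
    set M3 : ℝ := mixNorm p' w u with hM3
    have hM20 : 0 ≤ M2 := gsNorm_nonneg ht0 _
    have hM30 : 0 ≤ M3 := gsNorm_nonneg hw0 _
    -- Step A: bound on the Fourier coefficients
    have hgft : ∀ k, ‖gft u f k‖ ≤ gsNorm p' (u k) * Fp := by
      intro k
      have h1 : (‖gft u f k‖₊ : ℝ≥0∞) ≤ eLpNorm (u k) p' μ * eLpNorm f p μ := by
        calc (‖gft u f k‖₊ : ℝ≥0∞) ≤ ∑ n, (‖(starRingEnd 𝕂) (u k n) • f n‖₊ : ℝ≥0∞) := by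
              rw [← ENNReal.coe_finset_sum]
              exact_mod_cast nnnorm_sum_le _ _
          _ = eLpNorm ((fun n => (starRingEnd 𝕂) (u k n)) • f) 1 μ := by
              rw [eLpNorm_one_count]; rfl
          _ ≤ eLpNorm (fun n => (starRingEnd 𝕂) (u k n)) p' μ * eLpNorm f p μ := by
              refine eLpNorm_smul_le_mul_eLpNorm .of_discrete .of_discrete (hpqr := holder_of_one_div ?_)
              rw [one_div_one, add_comm (1 / p') (1 / p)]
              exact hpp'.symm
          _ = eLpNorm (u k) p' μ * eLpNorm f p μ := by
              rw [eLpNorm_congr_norm_ae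
                (Filter.Eventually.of_forall fun n => RCLike.norm_conj _)]
      have h2 := ENNReal.toReal_le_toReal (by exact ENNReal.coe_ne_top)
        (ENNReal.mul_ne_top (eLpNorm_count_ne_top _ _) (eLpNorm_count_ne_top _ _)) |>.mpr h1
      rwa [ENNReal.coe_toReal, coe_nnnorm, ENNReal.toReal_mul, ← gsNorm_eq_toReal hp'0,
        ← gsNorm_eq_toReal hp0] at h2
    -- Step B: pointwise bound
    set C : ℝ := M2 * (M3 * Fp) with hC
    have hC0 : 0 ≤ C := by positivity
    have hpt : ∀ n, ‖gtrans u m f n‖ ≤ gsNorm s (fun k => u k n) * C := by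
      intro n
      set v : ℝ≥0∞ := (1 / t + 1 / w)⁻¹ with hvdef
      have hv : 1 / v = 1 / t + 1 / w := by
        rw [one_div, hvdef, inv_inv]
      have hsv : (1 : ℝ≥0∞) / 1 = 1 / s + 1 / v := by
        rw [one_div_one, hv, ← add_assoc, hstw]
      set a : Fin N → 𝕂 := fun k => u k n with ha
      set b : Fin N → 𝕂 := fun k => u k m with hb
      set c : Fin N → 𝕂 := fun k => ((‖gft u f k‖ : ℝ) : 𝕂) with hc
      have key : (‖gtrans u m f n‖₊ : ℝ≥0∞) ≤
          eLpNorm a s μ * (eLpNorm b t μ * eLpNorm c w μ) := by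
        calc (‖gtrans u m f n‖₊ : ℝ≥0∞) ≤ ∑ k, (‖(a • (b • c)) k‖₊ : ℝ≥0∞) := by
              rw [← ENNReal.coe_finset_sum]
              refine ENNReal.coe_le_coe.2 ((nnnorm_sum_le _ _).trans (le_of_eq ?_))
              refine Finset.sum_congr rfl fun k _ => ?_
              have : (a • (b • c)) k = (u k n * (u k m * ((‖gft u f k‖ : ℝ) : 𝕂))) := rfl
              rw [this]
              simp only [nnnorm_smul, nnnorm_mul, RCLike.nnnorm_conj]
              rw [show ‖((‖gft u f k‖ : ℝ) : 𝕂)‖₊ = ‖gft u f k‖₊ by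
                ext; simp [RCLike.norm_ofReal]]
              ring
          _ = eLpNorm (a • (b • c)) 1 μ := (eLpNorm_one_count _).symm
          _ ≤ eLpNorm a s μ * eLpNorm (b • c) v μ :=
              eLpNorm_smul_le_mul_eLpNorm .of_discrete .of_discrete (hpqr := holder_of_one_div hsv)
          _ ≤ eLpNorm a s μ * (eLpNorm b t μ * eLpNorm c w μ) :=
              mul_le_mul_right (eLpNorm_smul_le_mul_eLpNorm .of_discrete .of_discrete (hpqr := holder_of_one_div hv)) _
      have hbB : eLpNorm b t μ ≤ ENNReal.ofReal M2 := by
        rw [hM2, mixNorm, ← eLpNorm_count_eq_ofReal ht0]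
        refine eLpNorm_mono fun k => ?_
        refine le_trans ?_ (le_abs_self _)
        have : ‖u k m‖ ≤ ⨆ j, ‖u k j‖ :=
          le_ciSup (f := fun j => ‖u k j‖) (Set.Finite.bddAbove (Set.finite_range _)) m
        simpa [gsNorm] using this
      have hcB : eLpNorm c w μ ≤ ENNReal.ofReal (M3 * Fp) := by
        have : eLpNorm c w μ ≤ eLpNorm (fun k => gsNorm p' (u k) * Fp) w μ := by
          refine eLpNorm_mono fun k => ?_
          refine le_trans ?_ (le_abs_self _)
          simpa [hc, RCLike.norm_ofReal, abs_norm] using hgft k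
        refine this.trans (le_of_eq ?_)
        have heq : (fun k => gsNorm p' (u k) * Fp) = Fp • (fun k => gsNorm p' (u k)) := by
          funext k; simp [mul_comm]
        rw [heq, eLpNorm_const_smul, Real.enorm_eq_ofReal hFp0,
          ENNReal.ofReal_mul hM30, hM3, mixNorm, ← eLpNorm_count_eq_ofReal hw0, mul_comm]
      have haB : eLpNorm a s μ = ENNReal.ofReal (gsNorm s a) :=
        eLpNorm_count_eq_ofReal hs0 a
      have key2 : (‖gtrans u m f n‖₊ : ℝ≥0∞) ≤ ENNReal.ofReal (gsNorm s a * C) := by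
        refine key.trans ?_
        rw [ENNReal.ofReal_mul (gsNorm_nonneg hs0 a), hC, ENNReal.ofReal_mul hM20, haB]
        exact mul_le_mul_right (mul_le_mul' hbB hcB) _
      rw [← enorm_eq_nnnorm, ← ofReal_norm] at key2
      exact (ENNReal.ofReal_le_ofReal_iff (mul_nonneg (gsNorm_nonneg hs0 a) hC0)).1 key2
    -- Step C: conclusion
    have hfin : eLpNorm (gtrans u m f) q μ ≤ ENNReal.ofReal C * ENNReal.ofReal M1 := by
      calc eLpNorm (gtrans u m f) q μ
          ≤ eLpNorm (fun n => gsNorm s (fun k => u k n) * C) q μ := by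
            refine eLpNorm_mono fun n => (hpt n).trans (le_abs_self _)
        _ = ENNReal.ofReal C * ENNReal.ofReal M1 := by
            have heq : (fun n => gsNorm s (fun k => u k n) * C)
                = C • (fun n => gsNorm s (fun k => u k n)) := by
              funext n; simp [mul_comm]
            rw [heq, eLpNorm_const_smul, Real.enorm_eq_ofReal hC0, hM1, mixNorm,
              ← eLpNorm_count_eq_ofReal hq0]
    have hM10 : 0 ≤ M1 := hM1 ▸ gsNorm_nonneg hq0 _
    have := ENNReal.toReal_le_toReal (eLpNorm_count_ne_top _ _)
      (ENNReal.mul_ne_top ENNReal.ofReal_ne_top ENNReal.ofReal_ne_top) |>.mpr hfin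
    rw [← gsNorm_eq_toReal hq0, ENNReal.toReal_mul, ENNReal.toReal_ofReal hC0,
      ENNReal.toReal_ofReal hM10] at this
    calc gsNorm q (gtrans u m f) ≤ C * M1 := this
      _ = M1 * M2 * M3 * Fp := by rw [hC]; ring
  · unfold gtrans gft
    refine continuous_pi fun n => ?_
    refine continuous_finset_sum _ fun k _ => ?_
    exact (continuous_finset_sum _ fun j _ => (continuous_apply j).const_smul _).const_smul _
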